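/- Let (a_i)_{i∈ℤ} be a real 5-periodic sequence and set b_i = a_{i+2}. Suppose every solution of V_i = a_i V_{i-1} - b_i V_{i-2} + V_{i-3} is 5-periodic. Then every solution of W_i = a_i W_{i-1} - W_{i-2} is 5-antiperiodic: W_{i+5} = -W_i for all i ∈ ℤ. -/
import Mathlib

noncomputable section PentagrammaAux

/-- One forward step of the third-order recurrence, acting on the state
`(V n, V (n+1), V (n+2))` to produce `(V (n+1), V (n+2), V (n+3))`. -/
def pentaFstep (a : ℤ → ℝ) (n : ℤ) (s : ℝ × ℝ × ℝ) : ℝ × ℝ × ℝ :=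
  (s.2.1, s.2.2, a (n + 3) * s.2.2 - a (n + 5) * s.2.1 + s.1)

/-- One backward step: from the state at `n` produce the state at `n - 1`. -/
def pentaBstep (a : ℤ → ℝ) (n : ℤ) (s : ℝ × ℝ × ℝ) : ℝ × ℝ × ℝ :=
  (s.2.2 - a (n + 2) * s.2.1 + a (n + 4) * s.1, s.1, s.2.1)

lemma pentaFB (a : ℤ → ℝ) (n : ℤ) (s : ℝ × ℝ × ℝ) :
    pentaFstep a (n - 1) (pentaBstep a n s) = s := by
  obtain ⟨x, y, z⟩ := s
  have e1 : n - 1 + 3 = n + 2 := by ring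
  have e2 : n - 1 + 5 = n + 4 := by ring
  simp only [pentaFstep, pentaBstep, e1, e2]
  refine Prod.ext rfl (Prod.ext rfl ?_)
  ring

/-- Forward states. -/
def pentaSf (a : ℤ → ℝ) (init : ℝ × ℝ × ℝ) : ℕ → ℝ × ℝ × ℝ
  | 0 => init
  | m + 1 => pentaFstep a m (pentaSf a init m)

/-- Backward states: `pentaSb a init m` is the state at `-(m : ℤ)`. -/
def pentaSb (a : ℤ → ℝ) (init : ℝ × ℝ × ℝ) : ℕ → ℝ × ℝ × ℝ
  | 0 => init
  | m + 1 => pentaBstep a (-(m : ℤ)) (pentaSb a init m)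

/-- The bi-infinite state sequence. -/
def pentaS (a : ℤ → ℝ) (init : ℝ × ℝ × ℝ) : ℤ → ℝ × ℝ × ℝ
  | Int.ofNat m => pentaSf a init m
  | Int.negSucc m => pentaSb a init (m + 1)

lemma pentaS_step (a : ℤ → ℝ) (init : ℝ × ℝ × ℝ) (n : ℤ) :
    pentaS a init (n + 1) = pentaFstep a n (pentaS a init n) := by
  cases n with
  | ofNat m =>
      have : (Int.ofNat m) + 1 = Int.ofNat (m + 1) := rfl
      rw [this]
      rfl
  | negSucc m =>
      cases m with
      | zero =>
          have h1 : Int.negSucc 0 + 1 = Int.ofNat 0 := rfl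
          rw [h1]
          have h2 : pentaS a init (Int.negSucc 0) = pentaBstep a 0 init := by
            show pentaSb a init 1 = pentaBstep a 0 init
            simp [pentaSb]
          rw [h2]
          have h3 : (Int.negSucc 0) = (0 : ℤ) - 1 := rfl
          rw [h3, pentaFB]
          rfl
      | succ k =>
          have h1 : Int.negSucc (k + 1) + 1 = Int.negSucc k := rfl
          rw [h1]
          show pentaSb a init (k + 1) =
            pentaFstep a (Int.negSucc (k + 1)) (pentaSb a init (k + 2))
          have h2 : pentaSb a init (k + 2)
              = pentaBstep a (-((k : ℤ) + 1)) (pentaSb a init (k + 1)) := by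
            show pentaSb a init ((k + 1) + 1) = _
            rw [pentaSb]
            push_cast
            ring_nf
          rw [h2]
          have h3 : (Int.negSucc (k + 1)) = (-((k : ℤ) + 1)) - 1 := by
            rw [Int.negSucc_eq]; push_cast; ring
          rw [h3, pentaFB]

/-- The bi-infinite solution with initial data `(V 0, V 1, V 2) = init`. -/
def pentaV (a : ℤ → ℝ) (init : ℝ × ℝ × ℝ) (n : ℤ) : ℝ :=
  (pentaS a init n).1

lemma pentaV_succ (a : ℤ → ℝ) (init : ℝ × ℝ × ℝ) (n : ℤ) :
    pentaV a init (n + 1) = (pentaS a init n).2.1 := by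
  unfold pentaV
  rw [pentaS_step]
  rfl

lemma pentaV_succ2 (a : ℤ → ℝ) (init : ℝ × ℝ × ℝ) (n : ℤ) :
    pentaV a init (n + 2) = (pentaS a init n).2.2 := by
  have h1 : n + 2 = (n + 1) + 1 := by ring
  rw [h1, pentaV_succ, pentaS_step]
  rfl

lemma pentaV_rec' (a : ℤ → ℝ) (init : ℝ × ℝ × ℝ) (n : ℤ) :
    pentaV a init (n + 3) = a (n + 3) * pentaV a init (n + 2)
      - a (n + 5) * pentaV a init (n + 1) + pentaV a init n := by
  have h := congrArg (fun s : ℝ × ℝ × ℝ => s.2.2) (pentaS_step a init n)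
  simp only [pentaFstep] at h
  have A1 : (pentaS a init (n + 1)).2.2 = pentaV a init (n + 3) := by
    have h2 := pentaV_succ2 a init (n + 1)
    have e : n + 1 + 2 = n + 3 := by ring
    rw [e] at h2
    exact h2.symm
  rw [A1, ← pentaV_succ2 a init n, ← pentaV_succ a init n] at h
  exact h

lemma pentaV_rec (a : ℤ → ℝ) (init : ℝ × ℝ × ℝ) (i : ℤ) :
    pentaV a init i = a i * pentaV a init (i - 1) - a (i + 2) * pentaV a init (i - 2)
      + pentaV a init (i - 3) := by
  have h := pentaV_rec' a init (i - 3)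
  have e1 : (i - 3) + 3 = i := by ring
  have e2 : (i - 3) + 5 = i + 2 := by ring
  have e3 : (i - 3) + 2 = i - 1 := by ring
  have e4 : (i - 3) + 1 = i - 2 := by ring
  rw [e1, e2, e3, e4] at h
  exact h

lemma pentaV_zero (a : ℤ → ℝ) (init : ℝ × ℝ × ℝ) : pentaV a init 0 = init.1 := rfl

lemma pentaV_one (a : ℤ → ℝ) (init : ℝ × ℝ × ℝ) : pentaV a init 1 = init.2.1 := rfl

lemma pentaV_two (a : ℤ → ℝ) (init : ℝ × ℝ × ℝ) : pentaV a init 2 = init.2.2 := rfl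

/-- The key case of the duality, at the base point `0`. -/
lemma pentagramma_key (a : ℤ → ℝ) (ha : ∀ i, a (i + 5) = a i)
    (hsuper : ∀ V : ℤ → ℝ,
      (∀ i, V i = a i * V (i - 1) - a (i + 2) * V (i - 2) + V (i - 3)) →
      (∀ i, V (i + 5) = V i))
    (W : ℤ → ℝ) (hW : ∀ i, W i = a i * W (i - 1) - W (i - 2)) :
    W 5 = -W 0 := by
  have ha0 : a 5 = a 0 := by have := ha 0; simpa using this
  have ha1 : a 6 = a 1 := by have := ha 1; simpa using this
  have ha2 : a 7 = a 2 := by have := ha 2; simpa using this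
  have ha3 : a 8 = a 3 := by have := ha 3; simpa using this
  -- First basis solution: initial data (1,0,0)
  have hE0 : a 0 * a 4 - a 2 = 1 := by
    set V := pentaV a (1, 0, 0) with hVdef
    have hrec : ∀ i, V i = a i * V (i - 1) - a (i + 2) * V (i - 2) + V (i - 3) :=
      fun i => pentaV_rec a (1, 0, 0) i
    have hper := hsuper V hrec
    have h0 : V 0 = 1 := rfl
    have h1 : V 1 = 0 := rfl
    have h2 : V 2 = 0 := rfl
    have h3 : V 3 = 1 := by
      have := hrec 3; norm_num at this; rw [h0, h1, h2, ha0] at this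
      linarith [this]
    have h4 : V 4 = a 4 := by
      have := hrec 4; norm_num at this; rw [h1, h2, h3, ha1] at this
      linarith [this]
    have h5 : V 5 = a 0 * a 4 - a 2 := by
      have := hrec 5; norm_num at this; rw [h2, h3, h4, ha0, ha2] at this
      linarith [this]
    have hp := hper 0
    norm_num at hp
    rw [h5, h0] at hp
    exact hp
  -- Second basis solution: initial data (0,1,0)
  have hE4 : a 0 * a 3 * a 4 - a 3 - a 0 = 1 := by
    set V := pentaV a (0, 1, 0) with hVdef
    have hrec : ∀ i, V i = a i * V (i - 1) - a (i + 2) * V (i - 2) + V (i - 3) :=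
      fun i => pentaV_rec a (0, 1, 0) i
    have hper := hsuper V hrec
    have h0 : V 0 = 0 := rfl
    have h1 : V 1 = 1 := rfl
    have h2 : V 2 = 0 := rfl
    have h3 : V 3 = -a 0 := by
      have := hrec 3; norm_num at this; rw [h0, h1, h2, ha0] at this
      linarith [this]
    have h4 : V 4 = 1 - a 0 * a 4 := by
      have := hrec 4; norm_num at this; rw [h1, h2, h3, ha1] at this
      linarith [this]
    have h5 : V 5 = a 0 * (1 - a 0 * a 4) + a 2 * a 0 := by
      have := hrec 5; norm_num at this; rw [h2, h3, h4, ha0, ha2] at this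
      linarith [this]
    have h6 : V 6 = a 1 * (a 0 * (1 - a 0 * a 4) + a 2 * a 0)
        - a 3 * (1 - a 0 * a 4) + (-a 0) := by
      have := hrec 6; norm_num at this; rw [h3, h4, h5, ha1, ha3] at this
      linarith [this]
    have hp := hper 1
    norm_num at hp
    rw [h6, h1] at hp
    linear_combination hp + (a 1 * a 0) * hE0
  -- Now unfold the second-order recurrence from 0 to 5.
  have w2 : W 2 = a 2 * W 1 - W 0 := by have := hW 2; norm_num at this; exact this
  have w3 : W 3 = a 3 * W 2 - W 1 := by have := hW 3; norm_num at this; exact this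
  have w4 : W 4 = a 4 * W 3 - W 2 := by have := hW 4; norm_num at this; exact this
  have w5 : W 5 = a 0 * W 4 - W 3 := by
    have := hW 5; norm_num at this; rw [ha0] at this; exact this
  rw [w5, w4, w3, w2]
  linear_combination (-W 1) * hE0 + (a 2 * W 1 - W 0) * hE4

end PentagrammaAux

/-- Pentagramma mirificum duality: if all solutions of
`V i = a i * V (i-1) - a (i+2) * V (i-2) + V (i-3)` (with `a` 5-periodic) are 5-periodic,
then all solutions of `W i = a i * W (i-1) - W (i-2)` are 5-antiperiodic. -/
theorem pentagramma_duality (a : ℤ → ℝ) (ha : ∀ i, a (i + 5) = a i)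
    (hsuper : ∀ V : ℤ → ℝ,
      (∀ i, V i = a i * V (i - 1) - a (i + 2) * V (i - 2) + V (i - 3)) →
      (∀ i, V (i + 5) = V i)) :
    ∀ W : ℤ → ℝ, (∀ i, W i = a i * W (i - 1) - W (i - 2)) →
      ∀ i, W (i + 5) = -W i := by
  intro W hW i
  -- shift everything by `i`
  set a' : ℤ → ℝ := fun j => a (j + i) with ha'def
  have ha' : ∀ j, a' (j + 5) = a' j := by
    intro j
    show a (j + 5 + i) = a (j + i)
    rw [show j + 5 + i = (j + i) + 5 from by ring, ha]
  have hsuper' : ∀ V : ℤ → ℝ,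
      (∀ j, V j = a' j * V (j - 1) - a' (j + 2) * V (j - 2) + V (j - 3)) →
      (∀ j, V (j + 5) = V j) := by
    intro V hV j
    set U : ℤ → ℝ := fun k => V (k - i) with hUdef
    have hU : ∀ k, U k = a k * U (k - 1) - a (k + 2) * U (k - 2) + U (k - 3) := by
      intro k
      have := hV (k - i)
      show V (k - i) = a k * V (k - 1 - i) - a (k + 2) * V (k - 2 - i) + V (k - 3 - i)
      have e0 : a' (k - i) = a k := by show a (k - i + i) = a k; rw [sub_add_cancel]
      have e1 : a' (k - i + 2) = a (k + 2) := by
        show a (k - i + 2 + i) = a (k + 2); congr 1; ring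
      have e2 : k - i - 1 = k - 1 - i := by ring
      have e3 : k - i - 2 = k - 2 - i := by ring
      have e4 : k - i - 3 = k - 3 - i := by ring
      rw [e0, e1, e2, e3, e4] at this
      exact this
    have := hsuper U hU (j + i)
    have e2 : j + i + 5 - i = j + 5 := by ring
    have e3 : j + i - i = j := by ring
    rw [hUdef] at this
    simpa [e2, e3] using this
  set W' : ℤ → ℝ := fun k => W (k + i) with hW'def
  have hWrec' : ∀ k, W' k = a' k * W' (k - 1) - W' (k - 2) := by
    intro k
    show W (k + i) = a (k + i) * W (k - 1 + i) - W (k - 2 + i)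
    have := hW (k + i)
    have e1 : k + i - 1 = k - 1 + i := by ring
    have e2 : k + i - 2 = k - 2 + i := by ring
    rw [e1, e2] at this
    exact this
  have h := pentagramma_key a' ha' hsuper' W' hWrec'
  show W (i + 5) = -W i
  have e4 : (5 : ℤ) + i = i + 5 := by ring
  have e5 : (0 : ℤ) + i = i := by ring
  rw [hW'def] at h
  simpa [e4, e5] using h
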